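/- Under approval voting where an attacker can cast each unit of power toward up to v distinct candidates but only needs t seats, the effective amplification of the attacker's power p_a is exactly min(v, t): distributing among more than t candidates wastes power, and with k ≤ min(v,t) votes per unit the attacker can give each of min(v,t) candidates score p_a but cannot give t candidates each a score exceeding p_a when v < t without extra power. Formally: the maximum real s such that the attacker with total power p_a can simultaneously give t distinct candidates score ≥ s each satisfies s = (min(v,t)/t)·p_a. -/

import Mathlib

/-- Under approval voting with at most `v` votes per account, the largest `s`
such that an attacker with total power `p_a` can give each of `t` candidates
score at least `s` is `(min(v,t)/t)·p_a`. -/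
theorem stmt11 (t v : ℕ) (ht : 1 ≤ t) (hv : 1 ≤ v) (pa : ℝ) (hpa : 0 ≤ pa) :
    IsGreatest {s : ℝ | ∃ (A : ℕ) (q : Fin A → ℝ) (votes : Fin A → Finset (Fin t)),
        (∀ i, 0 ≤ q i) ∧ (∑ i, q i) = pa ∧ (∀ i, (votes i).card ≤ v) ∧
        ∀ c : Fin t,
          s ≤ ∑ i ∈ Finset.univ.filter (fun i => c ∈ votes i), q i}
      (((min v t : ℕ) : ℝ) / (t : ℝ) * pa) := by
  have htz : t ≠ 0 := by omega
  have : NeZero t := ⟨htz⟩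
  have ht0 : (0:ℝ) < (t:ℝ) := by exact_mod_cast Nat.pos_of_ne_zero htz
  set k := min v t with hkdef
  have hkt : k ≤ t := min_le_right _ _
  have hkv : k ≤ v := min_le_left _ _
  have hcard : (Finset.univ.filter fun d : Fin t => (d:ℕ) < k).card = k := by
    have hEq : (Finset.univ.filter fun d : Fin t => (d:ℕ) < k) =
        Finset.map (Fin.castLEEmb hkt) Finset.univ := by
      ext d
      simp only [Finset.mem_filter, Finset.mem_univ, true_and, Finset.mem_map,
        Fin.castLEEmb, Function.Embedding.coeFn_mk]
      constructor
      · intro hd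
        exact ⟨⟨d.val, hd⟩, by ext; simp⟩
      · rintro ⟨j, rfl⟩; simpa using j.isLt
    rw [hEq, Finset.card_map, Finset.card_univ, Fintype.card_fin]
  constructor
  · -- membership: split pa into t accounts of pa/t, cyclic votes
    refine ⟨t, fun _ => pa / t,
      fun i => (Finset.univ.filter fun d : Fin t => (d:ℕ) < k).map
        (Equiv.addLeft i).toEmbedding, fun i => by positivity, ?_, ?_, ?_⟩
    · rw [Finset.sum_const, Finset.card_univ, Fintype.card_fin, nsmul_eq_mul]
      field_simp
    · intro i
      rw [Finset.card_map, hcard]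
      exact hkv
    · intro c
      have hfil : (Finset.univ.filter fun i : Fin t =>
          c ∈ (Finset.univ.filter fun d : Fin t => (d:ℕ) < k).map
            (Equiv.addLeft i).toEmbedding) =
          (Finset.univ.filter fun d : Fin t => (d:ℕ) < k).map
            (Equiv.subLeft c).toEmbedding := by
        ext i
        simp only [Finset.mem_filter, Finset.mem_univ, true_and, Finset.mem_map,
          Equiv.coe_toEmbedding, Equiv.coe_addLeft, Equiv.subLeft_apply]
        constructor
        · rintro ⟨d, hd, hdc⟩
          exact ⟨d, hd, by rw [← hdc]; exact add_sub_cancel_right i d⟩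
        · rintro ⟨d, hd, hdi⟩
          exact ⟨d, hd, by rw [← hdi]; exact sub_add_cancel c d⟩
      rw [hfil, Finset.sum_map, Finset.sum_const, hcard, nsmul_eq_mul]
      exact le_of_eq (by ring)
  · -- upper bound
    rintro s ⟨A, q, votes, hq0, hqsum, hvc, hsc⟩
    have key : (t:ℝ) * s ≤ (k:ℝ) * pa := by
      calc (t:ℝ) * s = ∑ _c : Fin t, s := by
            rw [Finset.sum_const, Finset.card_univ, Fintype.card_fin, nsmul_eq_mul]
        _ ≤ ∑ c : Fin t, ∑ i ∈ Finset.univ.filter (fun i => c ∈ votes i), q i :=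
            Finset.sum_le_sum fun c _ => hsc c
        _ = ∑ i, ((votes i).card : ℝ) * q i := by
            rw [Finset.sum_comm' (s := Finset.univ) (t := fun c => Finset.univ.filter
              (fun i => c ∈ votes i)) (t' := Finset.univ) (s' := fun i => votes i)]
            · simp [Finset.sum_const, nsmul_eq_mul]
            · intro c i
              simp [Finset.mem_filter, and_comm]
        _ ≤ ∑ i, (k:ℝ) * q i := by
            refine Finset.sum_le_sum fun i _ => ?_
            have h1 : (votes i).card ≤ k := by
              have h2 : (votes i).card ≤ t := by
                simpa using Finset.card_le_card (Finset.subset_univ (votes i))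
              exact le_min (hvc i) h2
            exact mul_le_mul_of_nonneg_right (by exact_mod_cast h1) (hq0 i)
        _ = (k:ℝ) * pa := by rw [← Finset.mul_sum, hqsum]
    rw [div_mul_eq_mul_div, le_div_iff₀ ht0]
    linarith [key]
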